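/- Let P be a probability measure on a measurable space X and ν a σ-finite measure on a measurable space Y. For each n ∈ ℕ and for n = ∞, let w_n : X × Y → [0,∞) be jointly measurable with ∫ w_n(x,y) ν(dy) = 1 for every x ∈ X, and suppose there is a constant B < ∞ with w_n(x,y) ≤ B for all n, x, y, and that w_n(x,y) → w_∞(x,y) as n → ∞ for every (x,y). Define the marginal densities q_n(y) := ∫ w_n(x,y) P(dx). Then liminf_{n→∞} ∫∫ w_n(x,y) · log( w_n(x,y)/q_n(y) ) ν(dy) P(dx) ≥ ∫∫ w_∞(x,y) · log( w_∞(x,y)/q_∞(y) ) ν(dy) P(dx), with the conventions 0·log(0/q) = 0 and w·log(w/0) = +∞ for w > 0; all integrals are well defined in (−∞, +∞] since the integrand is bounded below by −q_n(y)/e. -/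

import Mathlib

open MeasureTheory ProbabilityTheory ENNReal Filter

noncomputable section
open scoped Classical

/-- Kullback–Leibler divergence `D(μ‖ν) = ∫ log (dμ/dν) dμ`, valued in `[0,∞]`
(`∞` when the log-density is not integrable). -/
def KLdiv {Y : Type*} [MeasurableSpace Y] (μ ν : Measure Y) : ℝ≥0∞ :=
  if Integrable (fun y => Real.log (μ.rnDeriv ν y).toReal) μ then
    ENNReal.ofReal (∫ y, Real.log (μ.rnDeriv ν y).toReal ∂μ)
  else ∞

/-- Rényi divergence `D_α(μ‖ν) = (α-1)⁻¹ log ∫ (dμ/dν)^α dν`, valued in `[0,∞]`,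
`∞` when the integral is infinite (α>1) or zero (α<1). -/
def RenyiDiv {Y : Type*} [MeasurableSpace Y] (α : ℝ) (μ ν : Measure Y) : ℝ≥0∞ :=
  if (1 < α ∧ ∫⁻ y, μ.rnDeriv ν y ^ α ∂ν = ∞) ∨ (α < 1 ∧ ∫⁻ y, μ.rnDeriv ν y ^ α ∂ν = 0) then ∞
  else ENNReal.ofReal ((α - 1)⁻¹ * Real.log (∫⁻ y, μ.rnDeriv ν y ^ α ∂ν).toReal)

/-- Output marginal `Q_{P,W} = ∫ W(x,·) dP(x)`. -/
def outputM {X Y : Type*} [MeasurableSpace X] [MeasurableSpace Y]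
    (P : Measure X) (W : Kernel X Y) : Measure Y := P.bind (fun x => W x)

/-- Mutual information `I(P,W) = D(P ⊗ W ‖ P × Q_{P,W})`. -/
def mutInfo {X Y : Type*} [MeasurableSpace X] [MeasurableSpace Y]
    (P : Measure X) (W : Kernel X Y) : ℝ≥0∞ :=
  KLdiv (P.compProd W) (P.prod (outputM P W))

/-- The defining property of a `(δ,J)`-approximating family `V` of the compound
channel `(W s)_{s ∈ S}` under input distribution `P`. -/
def ApproxFam {X Y S : Type*} [MeasurableSpace X] [MeasurableSpace Y]
    (P : Measure X) (W : S → Kernel X Y) (δ : ℝ) {J : ℕ} (V : Fin J → Kernel X Y) : Prop :=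
  (∀ s : S, ∃ j : Fin J,
      (∫⁻ x, KLdiv (W s x) (V j x) ∂P) ≤ ENNReal.ofReal δ ∧
      (∃ α : ℝ, 1 < α ∧ ∀ x : X, RenyiDiv α (W s x) (V j x) < ∞) ∧
      mutInfo P (V j) - mutInfo P (W s) ≤ ENNReal.ofReal δ) ∧
  (∀ j : Fin J, ∃ s : S, mutInfo P (W s) - mutInfo P (V j) ≤ ENNReal.ofReal δ)

/-- The compound channel `(W s)_{s ∈ S}` can be `(δ,J)`-approximated under `P`. -/
def CanApprox {X Y S : Type*} [MeasurableSpace X] [MeasurableSpace Y]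
    (P : Measure X) (W : S → Kernel X Y) (δ : ℝ) (J : ℕ) : Prop :=
  ∃ V : Fin J → Kernel X Y, (∀ j, IsMarkovKernel (V j)) ∧ ApproxFam P W δ V

/-- The `(P,n,R)`-ensemble of random codebooks: `M` codewords drawn i.i.d. from `P^⊗n`. -/
def ensemble {X : Type*} [MeasurableSpace X] (P : Measure X) (n M : ℕ) :
    Measure (Fin M → Fin n → X) :=
  Measure.pi (fun _ => Measure.pi (fun _ => P))

/-- The cost-constrained codebook: codewords violating `∑ c ≤ n C` are replaced by `(x₀,…,x₀)`. -/
def constrainCB {X : Type*} (c : X → ℝ) (Cmax : ℝ) (x₀ : X) {n M : ℕ}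
    (cb : Fin M → Fin n → X) : Fin M → Fin n → X :=
  fun m => if ∑ j, c (cb m j) ≤ n * Cmax then cb m else fun _ => x₀

/-- Total variation norm `‖μ - ν‖` of the difference of two (finite) measures,
via the Jordan decomposition (`Measure.sub` is the positive part). -/
def tvDist {Z : Type*} [MeasurableSpace Z] (μ ν : Measure Z) : ℝ≥0∞ :=
  (μ - ν) Set.univ + (ν - μ) Set.univ
/-- The nonnegative (possibly infinite) integrand `w·log(w/q) + q/e`, encoding the
conventions `0·log(0/q) = 0` and `w·log(w/0) = +∞` for `w > 0`. Since
`w·log(w/q) ≥ -q/e`, adding `q/e` makes the integrand `[0,∞]`-valued, and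
`∫∫ w·log(w/q) dν dP = (∫∫ (w·log(w/q) + q/e) dν dP) - 1/e` as a value in `(-∞,∞]`
whenever `∫ q dν = 1` and `P` is a probability measure. -/
noncomputable def miIntegrand (w q : ℝ≥0∞) : ℝ≥0∞ :=
  if w = 0 then q / ENNReal.ofReal (Real.exp 1)
  else if q = 0 then ∞
  else ENNReal.ofReal (w.toReal * Real.log (w.toReal / q.toReal) + q.toReal / Real.exp 1)

/-- The quantity `∫∫ w·log(w/q) dν dP ∈ (-∞,∞]` (equal to the mutual information
`I(P,W)` when `w` is the density of the channel `W` w.r.t. `ν` and `q` the resulting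
output marginal density), represented in `EReal`. -/
noncomputable def miValue {X Y : Type*} [MeasurableSpace X] [MeasurableSpace Y]
    (P : Measure X) (ν : Measure Y) (w : X → Y → ℝ≥0∞) : EReal :=
  ((∫⁻ x, ∫⁻ y, miIntegrand (w x y) (∫⁻ x', w x' y ∂P) ∂ν ∂P : ℝ≥0∞) : EReal)
    - ((1 / Real.exp 1 : ℝ) : EReal)


section AuxLSC

open Real Filter

lemma mul_log_ge_neg_inv_exp {x : ℝ} (hx : 0 ≤ x) :
    -(Real.exp 1)⁻¹ ≤ x * Real.log x := by
  rcases eq_or_lt_of_le hx with h | h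
  · rw [← h]
    simp [neg_nonpos.mpr (inv_nonneg.mpr (Real.exp_pos 1).le)]
  · have h3 : (0 : ℝ) < Real.exp 1 := Real.exp_pos 1
    have h1 : 0 < (x * Real.exp 1)⁻¹ := by positivity
    have h2 := Real.log_le_sub_one_of_pos h1
    rw [Real.log_inv, Real.log_mul (ne_of_gt h) (Real.exp_ne_zero 1), Real.log_exp] at h2
    -- h2 : -(log x + 1) ≤ (x * exp 1)⁻¹ - 1
    have h5 : x * ((x * Real.exp 1)⁻¹ - 1) = (Real.exp 1)⁻¹ - x := by
      rw [mul_sub, mul_one]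
      congr 1
      field_simp
    have h6 := mul_le_mul_of_nonneg_left h2 h.le
    rw [h5] at h6
    have h8 : x * -(Real.log x + 1) = -(x * Real.log x) - x := by ring
    rw [h8] at h6
    linarith

lemma miIntegrand_le_liminf {a b : ℝ≥0∞} (ha : a ≠ ∞) (hb : b ≠ ∞)
    {u v : ℕ → ℝ≥0∞} (hu' : ∀ n, u n ≠ ∞) (hv' : ∀ n, v n ≠ ∞)
    (hu : Filter.Tendsto u Filter.atTop (nhds a))
    (hv : Filter.Tendsto v Filter.atTop (nhds b)) :
    miIntegrand a b ≤ Filter.liminf (fun n => miIntegrand (u n) (v n)) Filter.atTop := by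
  by_cases hb0 : b = 0
  · subst hb0
    by_cases ha0 : a = 0
    · subst ha0
      simp [miIntegrand]
    · have htop : Filter.Tendsto (fun n => miIntegrand (u n) (v n)) Filter.atTop (nhds ⊤) := by
        rw [ENNReal.tendsto_nhds_top_iff_nnreal]
        intro M
        have hα : 0 < a.toReal := ENNReal.toReal_pos ha0 ha
        set α0 : ℝ := a.toReal / 2 with hα0def
        have hα0 : 0 < α0 := by positivity
        have hαn : Filter.Tendsto (fun n => (u n).toReal) Filter.atTop (nhds a.toReal) :=
          (ENNReal.tendsto_toReal ha).comp hu
        have hβn : Filter.Tendsto (fun n => (v n).toReal) Filter.atTop (nhds 0) := by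
          simpa [Function.comp_def] using (ENNReal.tendsto_toReal (by simp : (0:ℝ≥0∞) ≠ ∞)).comp hv
        set δ : ℝ := min 1 (Real.exp (-(((M : ℝ)) + 1 + (Real.exp 1)⁻¹) / α0)) with hδdef
        have hδpos : 0 < δ := lt_min one_pos (Real.exp_pos _)
        have h1 : ∀ᶠ n in Filter.atTop, α0 < (u n).toReal :=
          hαn.eventually (eventually_gt_nhds (by rw [hα0def]; linarith))
        have h2 : ∀ᶠ n in Filter.atTop, (v n).toReal < δ :=
          hβn.eventually (eventually_lt_nhds hδpos)
        filter_upwards [h1, h2] with n hn1 hn2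
        have hαpos : 0 < (u n).toReal := lt_trans hα0 hn1
        have hun0 : u n ≠ 0 := by
          intro h
          rw [h] at hαpos
          simp at hαpos
        by_cases hvn0 : v n = 0
        · simp only [miIntegrand, if_neg hun0, if_pos hvn0]
          exact ENNReal.coe_lt_top
        · have hβpos : 0 < (v n).toReal := ENNReal.toReal_pos hvn0 (hv' n)
          have hlogβ : Real.log (v n).toReal < -(((M : ℝ)) + 1 + (Real.exp 1)⁻¹) / α0 := by
            have := Real.log_lt_log hβpos (lt_of_lt_of_le hn2 (min_le_right _ _))
            rwa [Real.log_exp] at this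
          have key : (M : ℝ) < (u n).toReal * Real.log ((u n).toReal / (v n).toReal)
              + (v n).toReal / Real.exp 1 := by
            rw [Real.log_div (ne_of_gt hαpos) (ne_of_gt hβpos), mul_sub]
            have e1 : -(Real.exp 1)⁻¹ ≤ (u n).toReal * Real.log (u n).toReal :=
              mul_log_ge_neg_inv_exp hαpos.le
            have hlogβneg : Real.log (v n).toReal < 0 := by
              have h1' : (v n).toReal < 1 := lt_of_lt_of_le hn2 (min_le_left _ _)
              have := Real.log_lt_log hβpos h1'
              simpa using this
            have e2 : α0 * (-Real.log (v n).toReal) ≤ (u n).toReal * (-Real.log (v n).toReal) :=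
              mul_le_mul_of_nonneg_right hn1.le (by linarith)
            have e3 : ((M : ℝ)) + 1 + (Real.exp 1)⁻¹ < α0 * (-Real.log (v n).toReal) := by
              have h4 := (lt_div_iff₀ hα0).mp hlogβ
              nlinarith [h4]
            have e4 : 0 ≤ (v n).toReal / Real.exp 1 := by positivity
            nlinarith [e1, e2, e3, e4]
          simp only [miIntegrand, if_neg hun0, if_neg hvn0]
          rw [show ((M : ℝ≥0∞)) = ENNReal.ofReal ((M : ℝ)) from ENNReal.ofReal_coe_nnreal.symm]
          have hMle : (0:ℝ) ≤ (M : ℝ) := M.coe_nonneg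
          exact (ENNReal.ofReal_lt_ofReal_iff (lt_of_le_of_lt hMle key)).mpr key
      rw [htop.liminf_eq]
      exact le_top
  · have hβ : 0 < b.toReal := ENNReal.toReal_pos hb0 hb
    have hαn : Filter.Tendsto (fun n => (u n).toReal) Filter.atTop (nhds a.toReal) :=
      (ENNReal.tendsto_toReal ha).comp hu
    have hβn : Filter.Tendsto (fun n => (v n).toReal) Filter.atTop (nhds b.toReal) :=
      (ENNReal.tendsto_toReal hb).comp hv
    set L : ℝ := a.toReal * Real.log a.toReal - a.toReal * Real.log b.toReal
        + b.toReal / Real.exp 1 with hLdef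
    have hreal : Filter.Tendsto (fun n => (u n).toReal * Real.log (u n).toReal
        - (u n).toReal * Real.log (v n).toReal + (v n).toReal / Real.exp 1)
        Filter.atTop (nhds L) := by
      apply Filter.Tendsto.add
      · apply Filter.Tendsto.sub
        · exact (Real.continuous_mul_log.tendsto _).comp hαn
        · exact hαn.mul (((Real.continuousAt_log (ne_of_gt hβ)).tendsto).comp hβn)
      · exact hβn.div_const _
    have hidd : ∀ (x y : ℝ), 0 < y →
        x * Real.log (x / y) = x * Real.log x - x * Real.log y := by
      intro x y hy
      rcases eq_or_ne x 0 with rfl | hx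
      · simp
      · rw [Real.log_div hx (ne_of_gt hy), mul_sub]
    have hvne : ∀ᶠ n in Filter.atTop, v n ≠ 0 := hv.eventually_ne hb0
    have heq : (fun n => ENNReal.ofReal ((u n).toReal * Real.log (u n).toReal
        - (u n).toReal * Real.log (v n).toReal + (v n).toReal / Real.exp 1))
        =ᶠ[Filter.atTop] (fun n => miIntegrand (u n) (v n)) := by
      filter_upwards [hvne] with n hn
      have hβpos : 0 < (v n).toReal := ENNReal.toReal_pos hn (hv' n)
      rcases eq_or_ne (u n) 0 with h0 | h0
      · rw [h0]
        simp only [miIntegrand, eq_self_iff_true, if_true, ENNReal.toReal_zero, zero_mul,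
          sub_zero, zero_add, sub_self]
        rw [ENNReal.ofReal_div_of_pos (Real.exp_pos 1), ENNReal.ofReal_toReal (hv' n)]
      · simp only [miIntegrand, if_neg h0, if_neg hn]
        rw [hidd _ _ hβpos]
    have hFtend : Filter.Tendsto (fun n => miIntegrand (u n) (v n)) Filter.atTop
        (nhds (ENNReal.ofReal L)) :=
      (ENNReal.tendsto_ofReal hreal).congr' heq
    rw [hFtend.liminf_eq]
    apply le_of_eq
    rcases eq_or_ne a 0 with rfl | ha0
    · simp only [miIntegrand, eq_self_iff_true, if_true, hLdef, ENNReal.toReal_zero, zero_mul,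
        sub_zero, zero_add, sub_self]
      rw [ENNReal.ofReal_div_of_pos (Real.exp_pos 1), ENNReal.ofReal_toReal hb]
    · simp only [miIntegrand, if_neg ha0, if_neg hb0]
      rw [hidd _ _ hβ, hLdef]

lemma measurable_miIntegrand :
    Measurable (fun p : ℝ≥0∞ × ℝ≥0∞ => miIntegrand p.1 p.2) := by
  have h1 : MeasurableSet {p : ℝ≥0∞ × ℝ≥0∞ | p.1 = 0} :=
    measurable_fst (measurableSet_singleton 0)
  have h2 : MeasurableSet {p : ℝ≥0∞ × ℝ≥0∞ | p.2 = 0} :=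
    measurable_snd (measurableSet_singleton 0)
  unfold miIntegrand
  refine Measurable.ite h1 (measurable_snd.div_const _) (Measurable.ite h2 measurable_const ?_)
  apply ENNReal.measurable_ofReal.comp
  apply Measurable.add
  · exact (ENNReal.measurable_toReal.comp measurable_fst).mul
      (Real.measurable_log.comp ((ENNReal.measurable_toReal.comp measurable_fst).div
        (ENNReal.measurable_toReal.comp measurable_snd)))
  · exact (ENNReal.measurable_toReal.comp measurable_snd).div_const _

lemma mi_lintegral_le_liminf
    {X Y : Type*} [MeasurableSpace X] [MeasurableSpace Y]
    (P : Measure X) [IsProbabilityMeasure P] (ν : Measure Y) [SigmaFinite ν]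
    (w : ℕ → X → Y → ℝ≥0∞) (winf : X → Y → ℝ≥0∞)
    (hmeas : ∀ n, Measurable (Function.uncurry (w n)))
    (hmeasinf : Measurable (Function.uncurry winf))
    (B : ℝ≥0∞) (hB : B < ∞)
    (hbound : ∀ n x y, w n x y ≤ B) (hboundinf : ∀ x y, winf x y ≤ B)
    (hconv : ∀ x y, Filter.Tendsto (fun n => w n x y) Filter.atTop (nhds (winf x y))) :
    (∫⁻ x, ∫⁻ y, miIntegrand (winf x y) (∫⁻ x', winf x' y ∂P) ∂ν ∂P)
      ≤ Filter.liminf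
        (fun n => ∫⁻ x, ∫⁻ y, miIntegrand (w n x y) (∫⁻ x', w n x' y ∂P) ∂ν ∂P)
        Filter.atTop := by
  have hBtop : B ≠ ∞ := hB.ne
  have hqconv : ∀ y, Filter.Tendsto (fun n => ∫⁻ x', w n x' y ∂P) Filter.atTop
      (nhds (∫⁻ x', winf x' y ∂P)) := by
    intro y
    apply tendsto_lintegral_of_dominated_convergence (fun _ => B)
    · intro n
      exact (hmeas n).comp (measurable_id.prodMk measurable_const)
    · intro n
      exact ae_of_all _ fun x => hbound n x y
    · simpa using hBtop
    · exact ae_of_all _ fun x => hconv x y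
  have hqB : ∀ n y, (∫⁻ x', w n x' y ∂P) ≤ B := fun n y => by
    calc (∫⁻ x', w n x' y ∂P) ≤ ∫⁻ _, B ∂P := lintegral_mono fun x => hbound n x y
      _ = B := by simp
  have hqinfB : ∀ y, (∫⁻ x', winf x' y ∂P) ≤ B := fun y => by
    calc (∫⁻ x', winf x' y ∂P) ≤ ∫⁻ _, B ∂P := lintegral_mono fun x => hboundinf x y
      _ = B := by simp
  have hpt : ∀ x y, miIntegrand (winf x y) (∫⁻ x', winf x' y ∂P)
      ≤ Filter.liminf (fun n => miIntegrand (w n x y) (∫⁻ x', w n x' y ∂P)) Filter.atTop := by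
    intro x y
    exact miIntegrand_le_liminf ((hboundinf x y).trans_lt hB).ne ((hqinfB y).trans_lt hB).ne
      (fun n => ((hbound n x y).trans_lt hB).ne) (fun n => ((hqB n y).trans_lt hB).ne)
      (hconv x y) (hqconv y)
  have hqmeas : ∀ n, Measurable (fun y => ∫⁻ x', w n x' y ∂P) := fun n =>
    (hmeas n).lintegral_prod_left'
  have hFmeas : ∀ n, Measurable (fun p : X × Y =>
      miIntegrand (w n p.1 p.2) (∫⁻ x', w n x' p.2 ∂P)) := fun n =>
    measurable_miIntegrand.comp ((hmeas n).prodMk ((hqmeas n).comp measurable_snd))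
  have hGmeas : ∀ n, Measurable (fun x =>
      ∫⁻ y, miIntegrand (w n x y) (∫⁻ x', w n x' y ∂P) ∂ν) := fun n =>
    (hFmeas n).lintegral_prod_right'
  calc (∫⁻ x, ∫⁻ y, miIntegrand (winf x y) (∫⁻ x', winf x' y ∂P) ∂ν ∂P)
      ≤ ∫⁻ x, ∫⁻ y, Filter.liminf
          (fun n => miIntegrand (w n x y) (∫⁻ x', w n x' y ∂P)) Filter.atTop ∂ν ∂P :=
        lintegral_mono fun x => lintegral_mono fun y => hpt x y
    _ ≤ ∫⁻ x, Filter.liminf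
          (fun n => ∫⁻ y, miIntegrand (w n x y) (∫⁻ x', w n x' y ∂P) ∂ν) Filter.atTop ∂P :=
        lintegral_mono fun x => lintegral_liminf_le fun n =>
          (hFmeas n).comp (measurable_prodMk_left)
    _ ≤ Filter.liminf
          (fun n => ∫⁻ x, ∫⁻ y, miIntegrand (w n x y) (∫⁻ x', w n x' y ∂P) ∂ν ∂P)
          Filter.atTop :=
        lintegral_liminf_le hGmeas

end AuxLSC

theorem mutual_information_lower_semicontinuous
    {X Y : Type*} [MeasurableSpace X] [MeasurableSpace Y]
    (P : Measure X) [IsProbabilityMeasure P] (ν : Measure Y) [SigmaFinite ν]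
    (w : ℕ → X → Y → ℝ≥0∞) (winf : X → Y → ℝ≥0∞)
    (hmeas : ∀ n, Measurable (Function.uncurry (w n)))
    (hmeasinf : Measurable (Function.uncurry winf))
    (hnorm : ∀ n x, ∫⁻ y, w n x y ∂ν = 1) (hnorminf : ∀ x, ∫⁻ y, winf x y ∂ν = 1)
    (B : ℝ≥0∞) (hB : B < ∞)
    (hbound : ∀ n x y, w n x y ≤ B) (hboundinf : ∀ x y, winf x y ≤ B)
    (hconv : ∀ x y, Filter.Tendsto (fun n => w n x y) Filter.atTop (nhds (winf x y))) :
    miValue P ν winf ≤ Filter.liminf (fun n => miValue P ν (w n)) Filter.atTop := 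
by
  have hkey := mi_lintegral_le_liminf P ν w winf hmeas hmeasinf B hB hbound hboundinf hconv
  set c : EReal := ((1 / Real.exp 1 : ℝ) : EReal) with hc
  have hmono : Monotone (fun t : ℝ≥0∞ => (t : EReal) - c) := by
    intro s t hst
    exact EReal.sub_le_sub (EReal.coe_ennreal_le_coe_ennreal_iff.mpr hst) le_rfl
  have hcont : Continuous (fun t : ℝ≥0∞ => (t : EReal) - c) := by
    have haddc : Continuous (fun e : EReal => e - c) := by
      rw [continuous_iff_continuousAt]
      intro x
      have h1 : ContinuousAt (fun p : EReal × EReal => p.1 + p.2)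
          (x, ((-(1 / Real.exp 1 : ℝ) : ℝ) : EReal)) :=
        EReal.continuousAt_add (Or.inr (EReal.coe_ne_bot _)) (Or.inr (EReal.coe_ne_top _))
      have h2 : ContinuousAt (fun e : EReal => e + ((-(1 / Real.exp 1 : ℝ) : ℝ) : EReal)) x :=
        ContinuousAt.comp (f := fun e : EReal => (e, ((-(1 / Real.exp 1 : ℝ) : ℝ) : EReal)))
          h1 (continuousAt_id.prodMk continuousAt_const)
      simpa [hc, sub_eq_add_neg, EReal.coe_neg] using h2
    exact haddc.comp continuous_coe_ennreal_ereal
  have hmap := hmono.map_liminf_of_continuousAt (F := Filter.atTop)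
    (fun n => ∫⁻ x, ∫⁻ y, miIntegrand (w n x y) (∫⁻ x', w n x' y ∂P) ∂ν ∂P)
    hcont.continuousAt
  show ((∫⁻ x, ∫⁻ y, miIntegrand (winf x y) (∫⁻ x', winf x' y ∂P) ∂ν ∂P : ℝ≥0∞) : EReal) - c
      ≤ Filter.liminf (fun n =>
        ((∫⁻ x, ∫⁻ y, miIntegrand (w n x y) (∫⁻ x', w n x' y ∂P) ∂ν ∂P : ℝ≥0∞) : EReal) - c)
        Filter.atTop
  exact le_trans (hmono hkey) (le_of_eq hmap)
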